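/- Let 𝒴 ⊂ ℝ be a finite set, let 𝒜, 𝒢₁, ℬ₁, 𝒢₂ be finite types, let p be a strictly positive probability mass function on 𝒴 × 𝒜 × 𝒢₁ × ℬ₁ × 𝒢₂, and fix a ∈ 𝒜. If Y ⊥ B₁ | (A, G₁, G₂) under p, then Var_p( ψ_a^{(G₁,B₁),G₂}(Y,A,G₁,B₁,G₂) ) ≥ Var_p( ψ_a^{G₁,G₂}(Y,A,G₁,G₂) ). -/

import Mathlib

open Finset

noncomputable section

variable {Y : Finset ℝ} {A G₁ B₁ G₂ : Type}
variable [Fintype A] [Fintype G₁] [Fintype B₁] [Fintype G₂] [DecidableEq A]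

/-- Marginal `p(g₁)`. -/
def pG1 (p : Y × A × G₁ × B₁ × G₂ → ℝ) (g₁ : G₁) : ℝ :=
  ∑ y : Y, ∑ a : A, ∑ b₁ : B₁, ∑ g₂ : G₂, p (y, a, g₁, b₁, g₂)

/-- Marginal `p(b₁)`. -/
def pB1 (p : Y × A × G₁ × B₁ × G₂ → ℝ) (b₁ : B₁) : ℝ :=
  ∑ y : Y, ∑ a : A, ∑ g₁ : G₁, ∑ g₂ : G₂, p (y, a, g₁, b₁, g₂)

/-- Marginal `p(g₂)`. -/
def pG2 (p : Y × A × G₁ × B₁ × G₂ → ℝ) (g₂ : G₂) : ℝ :=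
  ∑ y : Y, ∑ a : A, ∑ g₁ : G₁, ∑ b₁ : B₁, p (y, a, g₁, b₁, g₂)

/-- Marginal `p(g₁, b₁)`. -/
def pG1B1 (p : Y × A × G₁ × B₁ × G₂ → ℝ) (g₁ : G₁) (b₁ : B₁) : ℝ :=
  ∑ y : Y, ∑ a : A, ∑ g₂ : G₂, p (y, a, g₁, b₁, g₂)

/-- Marginal `p(a, b₁, g₂)`. -/
def pAB1G2 (p : Y × A × G₁ × B₁ × G₂ → ℝ) (a : A) (b₁ : B₁) (g₂ : G₂) : ℝ :=
  ∑ y : Y, ∑ g₁ : G₁, p (y, a, g₁, b₁, g₂)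

/-- Marginal `p(a, g₁, b₁, g₂)`. -/
def pAG1B1G2 (p : Y × A × G₁ × B₁ × G₂ → ℝ) (a : A) (g₁ : G₁) (b₁ : B₁) (g₂ : G₂) : ℝ :=
  ∑ y : Y, p (y, a, g₁, b₁, g₂)

/-- Marginal `p(a, g₁, g₂)`. -/
def pAG1G2 (p : Y × A × G₁ × B₁ × G₂ → ℝ) (a : A) (g₁ : G₁) (g₂ : G₂) : ℝ :=
  ∑ y : Y, ∑ b₁ : B₁, p (y, a, g₁, b₁, g₂)

/-- Outcome regression `m_B(b₁,g₂) = ∑_y y·p(y | a, b₁, g₂)` for the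
adjustment set `(B₁, G₂)`. -/
def mB (p : Y × A × G₁ × B₁ × G₂ → ℝ) (a : A) (b₁ : B₁) (g₂ : G₂) : ℝ :=
  ∑ y : Y, (y : ℝ) * ((∑ g₁ : G₁, p (y, a, g₁, b₁, g₂)) / pAB1G2 p a b₁ g₂)

/-- Outcome regression `m_{GB}(g₁,b₁,g₂) = ∑_y y·p(y | a, g₁, b₁, g₂)` for
the adjustment set `((G₁, B₁), G₂)`. -/
def mGB (p : Y × A × G₁ × B₁ × G₂ → ℝ) (a : A) (g₁ : G₁) (b₁ : B₁) (g₂ : G₂) : ℝ :=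
  ∑ y : Y, (y : ℝ) * (p (y, a, g₁, b₁, g₂) / pAG1B1G2 p a g₁ b₁ g₂)

/-- Outcome regression `m_{GG}(g₁,g₂) = ∑_y y·p(y | a, g₁, g₂)` for the
adjustment set `(G₁, G₂)`. -/
def mGG (p : Y × A × G₁ × B₁ × G₂ → ℝ) (a : A) (g₁ : G₁) (g₂ : G₂) : ℝ :=
  ∑ y : Y, (y : ℝ) * ((∑ b₁ : B₁, p (y, a, g₁, b₁, g₂)) / pAG1G2 p a g₁ g₂)

/-- Target parameter for the adjustment set `(B₁, G₂)`. -/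
def TB (p : Y × A × G₁ × B₁ × G₂ → ℝ) (a : A) : ℝ :=
  ∑ b₁ : B₁, pB1 p b₁ * ∑ g₂ : G₂, pG2 p g₂ * mB p a b₁ g₂

/-- Target parameter for the adjustment set `((G₁, B₁), G₂)`. -/
def TGB (p : Y × A × G₁ × B₁ × G₂ → ℝ) (a : A) : ℝ :=
  ∑ g₁ : G₁, ∑ b₁ : B₁, pG1B1 p g₁ b₁ * ∑ g₂ : G₂, pG2 p g₂ * mGB p a g₁ b₁ g₂

/-- Target parameter for the adjustment set `(G₁, G₂)`. -/
def TGG (p : Y × A × G₁ × B₁ × G₂ → ℝ) (a : A) : ℝ :=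
  ∑ g₁ : G₁, pG1 p g₁ * ∑ g₂ : G₂, pG2 p g₂ * mGG p a g₁ g₂

/-- Influence function `ψ_a^{B₁,G₂}` for the adjustment set `(B₁, G₂)`. -/
def psiB (p : Y × A × G₁ × B₁ × G₂ → ℝ) (a : A)
    (y : Y) (a' : A) (b₁ : B₁) (g₂ : G₂) : ℝ :=
  (if a' = a then (1 : ℝ) else 0) * (pB1 p b₁ * pG2 p g₂ / pAB1G2 p a b₁ g₂) *
      ((y : ℝ) - mB p a b₁ g₂)
    + (∑ g₂' : G₂, pG2 p g₂' * mB p a b₁ g₂')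
    + (∑ b₁' : B₁, pB1 p b₁' * mB p a b₁' g₂)
    - 2 * TB p a

/-- Influence function `ψ_a^{(G₁,B₁),G₂}` for the adjustment set `((G₁, B₁), G₂)`. -/
def psiGB (p : Y × A × G₁ × B₁ × G₂ → ℝ) (a : A)
    (y : Y) (a' : A) (g₁ : G₁) (b₁ : B₁) (g₂ : G₂) : ℝ :=
  (if a' = a then (1 : ℝ) else 0) *
      (pG1B1 p g₁ b₁ * pG2 p g₂ / pAG1B1G2 p a g₁ b₁ g₂) *
      ((y : ℝ) - mGB p a g₁ b₁ g₂)
    + (∑ g₂' : G₂, pG2 p g₂' * mGB p a g₁ b₁ g₂')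
    + (∑ g₁' : G₁, ∑ b₁' : B₁, pG1B1 p g₁' b₁' * mGB p a g₁' b₁' g₂)
    - 2 * TGB p a

/-- Influence function `ψ_a^{G₁,G₂}` for the adjustment set `(G₁, G₂)`. -/
def psiGG (p : Y × A × G₁ × B₁ × G₂ → ℝ) (a : A)
    (y : Y) (a' : A) (g₁ : G₁) (g₂ : G₂) : ℝ :=
  (if a' = a then (1 : ℝ) else 0) * (pG1 p g₁ * pG2 p g₂ / pAG1G2 p a g₁ g₂) *
      ((y : ℝ) - mGG p a g₁ g₂)
    + (∑ g₂' : G₂, pG2 p g₂' * mGG p a g₁ g₂')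
    + (∑ g₁' : G₁, pG1 p g₁' * mGG p a g₁' g₂)
    - 2 * TGG p a

/-- Conditional independence `G₁ ⊥ (A, G₂) | B₁` under `p`. -/
def CI_G1_AG2_B1 (p : Y × A × G₁ × B₁ × G₂ → ℝ) : Prop :=
  ∀ (g₁ : G₁) (a : A) (g₂ : G₂) (b₁ : B₁),
    (∑ y : Y, p (y, a, g₁, b₁, g₂)) / pB1 p b₁ =
      (pG1B1 p g₁ b₁ / pB1 p b₁) * (pAB1G2 p a b₁ g₂ / pB1 p b₁)

/-- Conditional independence `Y ⊥ B₁ | (A, G₁, G₂)` under `p`. -/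
def CI_Y_B1_AG1G2 (p : Y × A × G₁ × B₁ × G₂ → ℝ) : Prop :=
  ∀ (y : Y) (a : A) (g₁ : G₁) (b₁ : B₁) (g₂ : G₂),
    p (y, a, g₁, b₁, g₂) / pAG1G2 p a g₁ g₂ =
      ((∑ b₁' : B₁, p (y, a, g₁, b₁', g₂)) / pAG1G2 p a g₁ g₂) *
        (pAG1B1G2 p a g₁ b₁ g₂ / pAG1G2 p a g₁ g₂)

/-- Variance of a real function of the observation under `p`. -/
def VarP (p : Y × A × G₁ × B₁ × G₂ → ℝ) (f : Y × A × G₁ × B₁ × G₂ → ℝ) : ℝ :=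
  (∑ o : Y × A × G₁ × B₁ × G₂, p o * f o ^ 2) -
    (∑ o : Y × A × G₁ × B₁ × G₂, p o * f o) ^ 2


/-- Swap the first summation index to the innermost position (4 indices). -/
theorem sum_swap4 {ι₁ ι₂ ι₃ ι₄ : Type*} [Fintype ι₁] [Fintype ι₂] [Fintype ι₃] [Fintype ι₄]
    (f : ι₁ → ι₂ → ι₃ → ι₄ → ℝ) :
    ∑ a : ι₁, ∑ b : ι₂, ∑ c : ι₃, ∑ d : ι₄, f a b c d
      = ∑ b : ι₂, ∑ c : ι₃, ∑ d : ι₄, ∑ a : ι₁, f a b c d := by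
  rw [Finset.sum_comm]
  refine Finset.sum_congr rfl fun b _ => ?_
  rw [Finset.sum_comm]
  refine Finset.sum_congr rfl fun c _ => ?_
  rw [Finset.sum_comm]

/-- The difference `psiGB - psiGG` under conditional independence. -/
def Dfun (p : Y × A × G₁ × B₁ × G₂ → ℝ) (a : A)
    (y : Y) (a' : A) (g₁ : G₁) (b₁ : B₁) (g₂ : G₂) : ℝ :=
  (if a' = a then (1 : ℝ) else 0) *
    ((pG1B1 p g₁ b₁ * pG2 p g₂ / pAG1B1G2 p a g₁ b₁ g₂
        - pG1 p g₁ * pG2 p g₂ / pAG1G2 p a g₁ g₂) * ((y : ℝ) - mGG p a g₁ g₂))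

/-- Lemma 4.4 (deletion of overadjustment mediator variables), discrete
form: under `Y ⊥ B₁ | (A, G₁, G₂)`, removing the mediating covariates
`B₁` never increases the asymptotic variance of the WCDE influence
function. -/
theorem variance_deletion_mediator
    (p : Y × A × G₁ × B₁ × G₂ → ℝ)
    (hpos : ∀ o, 0 < p o) (hsum : ∑ o, p o = 1) (a : A)
    (hCI : CI_Y_B1_AG1G2 p) :
    VarP p (fun o => psiGB p a o.1 o.2.1 o.2.2.1 o.2.2.2.1 o.2.2.2.2) ≥
      VarP p (fun o => psiGG p a o.1 o.2.1 o.2.2.1 o.2.2.2.2) := by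
  classical
  -- nonemptiness of the component types
  have hne : Nonempty (Y × A × G₁ × B₁ × G₂) := by
    by_contra h
    rw [not_nonempty_iff] at h
    rw [Finset.univ_eq_empty, Finset.sum_empty] at hsum
    norm_num at hsum
  obtain ⟨⟨y₀, a₀, g₁₀, b₁₀, g₂₀⟩⟩ := hne
  haveI : Nonempty Y := ⟨y₀⟩
  haveI : Nonempty B₁ := ⟨b₁₀⟩
  -- positivity of the relevant marginals
  have hr : ∀ g₁ b₁ g₂, 0 < pAG1B1G2 p a g₁ b₁ g₂ := fun g₁ b₁ g₂ =>
    Finset.sum_pos (fun y _ => hpos _) Finset.univ_nonempty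
  have hQ : ∀ g₁ g₂, 0 < pAG1G2 p a g₁ g₂ := fun g₁ g₂ =>
    Finset.sum_pos (fun y _ => Finset.sum_pos (fun b₁ _ => hpos _) Finset.univ_nonempty)
      Finset.univ_nonempty
  have hrne : ∀ g₁ b₁ g₂, pAG1B1G2 p a g₁ b₁ g₂ ≠ 0 := fun g₁ b₁ g₂ => (hr g₁ b₁ g₂).ne'
  have hQne : ∀ g₁ g₂, pAG1G2 p a g₁ g₂ ≠ 0 := fun g₁ g₂ => (hQ g₁ g₂).ne'
  -- factorization from conditional independence
  have hfac : ∀ (y : Y) (g₁ : G₁) (b₁ : B₁) (g₂ : G₂),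
      p (y, a, g₁, b₁, g₂) * pAG1G2 p a g₁ g₂
        = (∑ b₁' : B₁, p (y, a, g₁, b₁', g₂)) * pAG1B1G2 p a g₁ b₁ g₂ := by
    intro y g₁ b₁ g₂
    have h := hCI y a g₁ b₁ g₂
    have hQ' := hQne g₁ g₂
    field_simp at h
    exact mul_right_cancel₀ hQ' (by linear_combination pAG1G2 p a g₁ g₂ * h)
  -- the two outcome regressions coincide
  have hm : ∀ g₁ b₁ g₂, mGB p a g₁ b₁ g₂ = mGG p a g₁ g₂ := by
    intro g₁ b₁ g₂
    unfold mGB mGG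
    refine Finset.sum_congr rfl fun y _ => ?_
    have h := hfac y g₁ b₁ g₂
    have h1 := hrne g₁ b₁ g₂
    have h2 := hQne g₁ g₂
    field_simp
    linear_combination (y : ℝ) * h
  -- marginal sum identities
  have hsum_pG1B1 : ∀ g₁, ∑ b₁ : B₁, pG1B1 p g₁ b₁ = pG1 p g₁ := by
    intro g₁
    simp only [pG1B1, pG1]
    rw [sum_swap4 (fun (b₁ : B₁) (y : Y) (a' : A) (g₂ : G₂) => p (y, a', g₁, b₁, g₂))]
    exact Finset.sum_congr rfl fun y _ => Finset.sum_congr rfl fun a' _ => Finset.sum_comm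
  have hsum_pAB : ∀ g₁ g₂, ∑ b₁ : B₁, pAG1B1G2 p a g₁ b₁ g₂ = pAG1G2 p a g₁ g₂ := by
    intro g₁ g₂
    simp only [pAG1B1G2, pAG1G2]
    exact Finset.sum_comm
  -- first moment identity
  have hsum_yp : ∀ g₁ b₁ g₂, ∑ y : Y, (y : ℝ) * p (y, a, g₁, b₁, g₂)
      = mGB p a g₁ b₁ g₂ * pAG1B1G2 p a g₁ b₁ g₂ := by
    intro g₁ b₁ g₂
    unfold mGB
    rw [Finset.sum_mul]
    refine Finset.sum_congr rfl fun y _ => ?_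
    have h1 := hrne g₁ b₁ g₂
    field_simp
  have S1 : ∀ g₁ b₁ g₂,
      ∑ y : Y, p (y, a, g₁, b₁, g₂) * ((y : ℝ) - mGG p a g₁ g₂) = 0 := by
    intro g₁ b₁ g₂
    have e : ∑ y : Y, p (y, a, g₁, b₁, g₂) * ((y : ℝ) - mGG p a g₁ g₂)
        = (∑ y : Y, (y : ℝ) * p (y, a, g₁, b₁, g₂))
          - mGG p a g₁ g₂ * (∑ y : Y, p (y, a, g₁, b₁, g₂)) := by
      rw [Finset.mul_sum, ← Finset.sum_sub_distrib]
      exact Finset.sum_congr rfl fun y _ => by ring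
    have e2 : (∑ y : Y, p (y, a, g₁, b₁, g₂)) = pAG1B1G2 p a g₁ b₁ g₂ := rfl
    rw [e, hsum_yp g₁ b₁ g₂, hm g₁ b₁ g₂, e2]
    ring
  -- second moment factorization
  have hV : ∀ g₁ b₁ g₂,
      ∑ y : Y, p (y, a, g₁, b₁, g₂) * ((y : ℝ) - mGG p a g₁ g₂) ^ 2
        = pAG1B1G2 p a g₁ b₁ g₂ / pAG1G2 p a g₁ g₂ *
          ∑ y : Y, (∑ b₁' : B₁, p (y, a, g₁, b₁', g₂)) * ((y : ℝ) - mGG p a g₁ g₂) ^ 2 := by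
    intro g₁ b₁ g₂
    rw [Finset.mul_sum]
    refine Finset.sum_congr rfl fun y _ => ?_
    have h := hfac y g₁ b₁ g₂
    have h2 := hQne g₁ g₂
    field_simp
    linear_combination ((y : ℝ) - mGG p a g₁ g₂) ^ 2 * h
  -- the weights sum to zero against pAG1B1G2
  have hc0 : ∀ g₁ g₂,
      ∑ b₁ : B₁, (pG1B1 p g₁ b₁ * pG2 p g₂ / pAG1B1G2 p a g₁ b₁ g₂
          - pG1 p g₁ * pG2 p g₂ / pAG1G2 p a g₁ g₂) * pAG1B1G2 p a g₁ b₁ g₂ = 0 := by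
    intro g₁ g₂
    have e : ∀ b₁ : B₁,
        (pG1B1 p g₁ b₁ * pG2 p g₂ / pAG1B1G2 p a g₁ b₁ g₂
            - pG1 p g₁ * pG2 p g₂ / pAG1G2 p a g₁ g₂) * pAG1B1G2 p a g₁ b₁ g₂
          = pG1B1 p g₁ b₁ * pG2 p g₂
            - pG1 p g₁ * pG2 p g₂ / pAG1G2 p a g₁ g₂ * pAG1B1G2 p a g₁ b₁ g₂ := by
      intro b₁
      rw [sub_mul, div_mul_cancel₀ _ (hrne g₁ b₁ g₂)]
    calc ∑ b₁ : B₁, (pG1B1 p g₁ b₁ * pG2 p g₂ / pAG1B1G2 p a g₁ b₁ g₂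
          - pG1 p g₁ * pG2 p g₂ / pAG1G2 p a g₁ g₂) * pAG1B1G2 p a g₁ b₁ g₂
        = ∑ b₁ : B₁, (pG1B1 p g₁ b₁ * pG2 p g₂
            - pG1 p g₁ * pG2 p g₂ / pAG1G2 p a g₁ g₂ * pAG1B1G2 p a g₁ b₁ g₂) :=
          Finset.sum_congr rfl fun b₁ _ => e b₁
      _ = (∑ b₁ : B₁, pG1B1 p g₁ b₁) * pG2 p g₂
            - pG1 p g₁ * pG2 p g₂ / pAG1G2 p a g₁ g₂ * (∑ b₁ : B₁, pAG1B1G2 p a g₁ b₁ g₂) := by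
          rw [Finset.sum_sub_distrib, Finset.sum_mul, Finset.mul_sum]
      _ = 0 := by
          rw [hsum_pG1B1 g₁, hsum_pAB g₁ g₂, div_mul_cancel₀ _ (hQne g₁ g₂)]
          ring
  -- S2 : second moment orthogonality
  have S2 : ∀ g₁ g₂,
      ∑ b₁ : B₁, (pG1B1 p g₁ b₁ * pG2 p g₂ / pAG1B1G2 p a g₁ b₁ g₂
          - pG1 p g₁ * pG2 p g₂ / pAG1G2 p a g₁ g₂) *
          (∑ y : Y, p (y, a, g₁, b₁, g₂) * ((y : ℝ) - mGG p a g₁ g₂) ^ 2) = 0 := by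
    intro g₁ g₂
    have e : ∀ b₁ : B₁,
        (pG1B1 p g₁ b₁ * pG2 p g₂ / pAG1B1G2 p a g₁ b₁ g₂
            - pG1 p g₁ * pG2 p g₂ / pAG1G2 p a g₁ g₂) *
            (∑ y : Y, p (y, a, g₁, b₁, g₂) * ((y : ℝ) - mGG p a g₁ g₂) ^ 2)
          = ((pG1B1 p g₁ b₁ * pG2 p g₂ / pAG1B1G2 p a g₁ b₁ g₂
            - pG1 p g₁ * pG2 p g₂ / pAG1G2 p a g₁ g₂) * pAG1B1G2 p a g₁ b₁ g₂) *
            ((∑ y : Y, (∑ b₁' : B₁, p (y, a, g₁, b₁', g₂)) * ((y : ℝ) - mGG p a g₁ g₂) ^ 2)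
              / pAG1G2 p a g₁ g₂) := by
      intro b₁
      rw [hV g₁ b₁ g₂]
      ring
    calc ∑ b₁ : B₁, (pG1B1 p g₁ b₁ * pG2 p g₂ / pAG1B1G2 p a g₁ b₁ g₂
          - pG1 p g₁ * pG2 p g₂ / pAG1G2 p a g₁ g₂) *
          (∑ y : Y, p (y, a, g₁, b₁, g₂) * ((y : ℝ) - mGG p a g₁ g₂) ^ 2)
        = (∑ b₁ : B₁, (pG1B1 p g₁ b₁ * pG2 p g₂ / pAG1B1G2 p a g₁ b₁ g₂
            - pG1 p g₁ * pG2 p g₂ / pAG1G2 p a g₁ g₂) * pAG1B1G2 p a g₁ b₁ g₂) *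
            ((∑ y : Y, (∑ b₁' : B₁, p (y, a, g₁, b₁', g₂)) * ((y : ℝ) - mGG p a g₁ g₂) ^ 2)
              / pAG1G2 p a g₁ g₂) := by
          rw [Finset.sum_mul]
          exact Finset.sum_congr rfl fun b₁ _ => e b₁
      _ = 0 := by rw [hc0 g₁ g₂, zero_mul]
  -- auxiliary rewriting of the psiGB terms
  have hB : ∀ g₁ b₁, (∑ g₂' : G₂, pG2 p g₂' * mGB p a g₁ b₁ g₂')
      = ∑ g₂' : G₂, pG2 p g₂' * mGG p a g₁ g₂' := fun g₁ b₁ =>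
    Finset.sum_congr rfl fun g₂' _ => by rw [hm]
  have hR : ∀ g₂ : G₂, (∑ g₁' : G₁, ∑ b₁' : B₁, pG1B1 p g₁' b₁' * mGB p a g₁' b₁' g₂)
      = ∑ g₁' : G₁, pG1 p g₁' * mGG p a g₁' g₂ := by
    intro g₂
    refine Finset.sum_congr rfl fun g₁' _ => ?_
    calc ∑ b₁' : B₁, pG1B1 p g₁' b₁' * mGB p a g₁' b₁' g₂
        = ∑ b₁' : B₁, pG1B1 p g₁' b₁' * mGG p a g₁' g₂ :=
          Finset.sum_congr rfl fun b₁' _ => by rw [hm]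
      _ = (∑ b₁' : B₁, pG1B1 p g₁' b₁') * mGG p a g₁' g₂ := (Finset.sum_mul _ _ _).symm
      _ = pG1 p g₁' * mGG p a g₁' g₂ := by rw [hsum_pG1B1]
  have hT : TGB p a = TGG p a := by
    unfold TGB TGG
    refine Finset.sum_congr rfl fun g₁ _ => ?_
    calc ∑ b₁ : B₁, pG1B1 p g₁ b₁ * ∑ g₂ : G₂, pG2 p g₂ * mGB p a g₁ b₁ g₂
        = ∑ b₁ : B₁, pG1B1 p g₁ b₁ * ∑ g₂ : G₂, pG2 p g₂ * mGG p a g₁ g₂ :=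
          Finset.sum_congr rfl fun b₁ _ => by rw [hB g₁ b₁]
      _ = (∑ b₁ : B₁, pG1B1 p g₁ b₁) * ∑ g₂ : G₂, pG2 p g₂ * mGG p a g₁ g₂ :=
          (Finset.sum_mul _ _ _).symm
      _ = pG1 p g₁ * ∑ g₂ : G₂, pG2 p g₂ * mGG p a g₁ g₂ := by rw [hsum_pG1B1]
  -- decomposition psiGB = psiGG + Dfun
  have hD : ∀ (y : Y) (a' : A) (g₁ : G₁) (b₁ : B₁) (g₂ : G₂),
      psiGB p a y a' g₁ b₁ g₂ = psiGG p a y a' g₁ g₂ + Dfun p a y a' g₁ b₁ g₂ := by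
    intro y a' g₁ b₁ g₂
    unfold psiGB psiGG Dfun
    rw [hm g₁ b₁ g₂, hT, hR g₂, hB g₁ b₁]
    ring
  -- the two orthogonality sums
  have h1 : ∑ o : Y × A × G₁ × B₁ × G₂,
      p o * Dfun p a o.1 o.2.1 o.2.2.1 o.2.2.2.1 o.2.2.2.2 = 0 := by
    simp only [Fintype.sum_prod_type]
    have hcol : ∀ y : Y,
        (∑ a' : A, ∑ g₁ : G₁, ∑ b₁ : B₁, ∑ g₂ : G₂,
            p (y, a', g₁, b₁, g₂) * Dfun p a y a' g₁ b₁ g₂)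
          = ∑ g₁ : G₁, ∑ b₁ : B₁, ∑ g₂ : G₂,
            p (y, a, g₁, b₁, g₂) * Dfun p a y a g₁ b₁ g₂ := by
      intro y
      refine Finset.sum_eq_single a (fun b _ hb => ?_) (fun h => absurd (Finset.mem_univ a) h)
      refine Finset.sum_eq_zero fun g₁ _ => Finset.sum_eq_zero fun b₁ _ =>
        Finset.sum_eq_zero fun g₂ _ => ?_
      simp [Dfun, hb]
    rw [Finset.sum_congr rfl fun y _ => hcol y]
    rw [sum_swap4 (fun (y : Y) (g₁ : G₁) (b₁ : B₁) (g₂ : G₂) =>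
      p (y, a, g₁, b₁, g₂) * Dfun p a y a g₁ b₁ g₂)]
    refine Finset.sum_eq_zero fun g₁ _ => Finset.sum_eq_zero fun b₁ _ =>
      Finset.sum_eq_zero fun g₂ _ => ?_
    calc ∑ y : Y, p (y, a, g₁, b₁, g₂) * Dfun p a y a g₁ b₁ g₂
        = (pG1B1 p g₁ b₁ * pG2 p g₂ / pAG1B1G2 p a g₁ b₁ g₂
            - pG1 p g₁ * pG2 p g₂ / pAG1G2 p a g₁ g₂) *
          ∑ y : Y, p (y, a, g₁, b₁, g₂) * ((y : ℝ) - mGG p a g₁ g₂) := by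
          rw [Finset.mul_sum]
          refine Finset.sum_congr rfl fun y _ => ?_
          simp only [Dfun, if_pos rfl, eq_self_iff_true, if_true, ite_true, one_mul]
          ring
      _ = 0 := by rw [S1 g₁ b₁ g₂, mul_zero]
  have h2 : ∑ o : Y × A × G₁ × B₁ × G₂,
      p o * (Dfun p a o.1 o.2.1 o.2.2.1 o.2.2.2.1 o.2.2.2.2 *
        psiGG p a o.1 o.2.1 o.2.2.1 o.2.2.2.2) = 0 := by
    simp only [Fintype.sum_prod_type]
    have hcol : ∀ y : Y,
        (∑ a' : A, ∑ g₁ : G₁, ∑ b₁ : B₁, ∑ g₂ : G₂,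
            p (y, a', g₁, b₁, g₂) * (Dfun p a y a' g₁ b₁ g₂ * psiGG p a y a' g₁ g₂))
          = ∑ g₁ : G₁, ∑ b₁ : B₁, ∑ g₂ : G₂,
            p (y, a, g₁, b₁, g₂) * (Dfun p a y a g₁ b₁ g₂ * psiGG p a y a g₁ g₂) := by
      intro y
      refine Finset.sum_eq_single a (fun b _ hb => ?_) (fun h => absurd (Finset.mem_univ a) h)
      refine Finset.sum_eq_zero fun g₁ _ => Finset.sum_eq_zero fun b₁ _ =>
        Finset.sum_eq_zero fun g₂ _ => ?_
      simp [Dfun, hb]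
    rw [Finset.sum_congr rfl fun y _ => hcol y]
    rw [sum_swap4 (fun (y : Y) (g₁ : G₁) (b₁ : B₁) (g₂ : G₂) =>
      p (y, a, g₁, b₁, g₂) * (Dfun p a y a g₁ b₁ g₂ * psiGG p a y a g₁ g₂))]
    refine Finset.sum_eq_zero fun g₁ _ => ?_
    rw [Finset.sum_comm]
    refine Finset.sum_eq_zero fun g₂ _ => ?_
    have expand : ∀ b₁ : B₁,
        ∑ y : Y, p (y, a, g₁, b₁, g₂) * (Dfun p a y a g₁ b₁ g₂ * psiGG p a y a g₁ g₂)
          = ((pG1B1 p g₁ b₁ * pG2 p g₂ / pAG1B1G2 p a g₁ b₁ g₂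
              - pG1 p g₁ * pG2 p g₂ / pAG1G2 p a g₁ g₂) *
              (pG1 p g₁ * pG2 p g₂ / pAG1G2 p a g₁ g₂)) *
              (∑ y : Y, p (y, a, g₁, b₁, g₂) * ((y : ℝ) - mGG p a g₁ g₂) ^ 2)
            + ((pG1B1 p g₁ b₁ * pG2 p g₂ / pAG1B1G2 p a g₁ b₁ g₂
              - pG1 p g₁ * pG2 p g₂ / pAG1G2 p a g₁ g₂) *
              ((∑ g₂' : G₂, pG2 p g₂' * mGG p a g₁ g₂')
                + (∑ g₁' : G₁, pG1 p g₁' * mGG p a g₁' g₂) - 2 * TGG p a)) *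
              (∑ y : Y, p (y, a, g₁, b₁, g₂) * ((y : ℝ) - mGG p a g₁ g₂)) := by
      intro b₁
      rw [Finset.mul_sum, Finset.mul_sum, ← Finset.sum_add_distrib]
      refine Finset.sum_congr rfl fun y _ => ?_
      simp only [Dfun, psiGG, if_pos rfl, eq_self_iff_true, if_true, ite_true, one_mul]
      ring
    rw [Finset.sum_congr rfl fun b₁ _ => expand b₁]
    simp only [S1 g₁, mul_zero, add_zero]
    calc ∑ b₁ : B₁, ((pG1B1 p g₁ b₁ * pG2 p g₂ / pAG1B1G2 p a g₁ b₁ g₂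
            - pG1 p g₁ * pG2 p g₂ / pAG1G2 p a g₁ g₂) *
            (pG1 p g₁ * pG2 p g₂ / pAG1G2 p a g₁ g₂)) *
            (∑ y : Y, p (y, a, g₁, b₁, g₂) * ((y : ℝ) - mGG p a g₁ g₂) ^ 2)
        = (∑ b₁ : B₁, (pG1B1 p g₁ b₁ * pG2 p g₂ / pAG1B1G2 p a g₁ b₁ g₂
            - pG1 p g₁ * pG2 p g₂ / pAG1G2 p a g₁ g₂) *
            (∑ y : Y, p (y, a, g₁, b₁, g₂) * ((y : ℝ) - mGG p a g₁ g₂) ^ 2)) *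
            (pG1 p g₁ * pG2 p g₂ / pAG1G2 p a g₁ g₂) := by
          rw [Finset.sum_mul]
          exact Finset.sum_congr rfl fun b₁ _ => by ring
      _ = 0 := by rw [S2 g₁ g₂, zero_mul]
  -- final variance comparison
  have hsq : (0 : ℝ) ≤ ∑ o : Y × A × G₁ × B₁ × G₂,
      p o * Dfun p a o.1 o.2.1 o.2.2.1 o.2.2.2.1 o.2.2.2.2 ^ 2 :=
    Finset.sum_nonneg fun o _ => mul_nonneg (hpos o).le (sq_nonneg _)
  rw [ge_iff_le]
  simp only [VarP]
  have e1 : ∑ o : Y × A × G₁ × B₁ × G₂,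
      p o * psiGB p a o.1 o.2.1 o.2.2.1 o.2.2.2.1 o.2.2.2.2 ^ 2
      = ∑ o : Y × A × G₁ × B₁ × G₂,
        (p o * psiGG p a o.1 o.2.1 o.2.2.1 o.2.2.2.2 ^ 2
          + (2 * (p o * (Dfun p a o.1 o.2.1 o.2.2.1 o.2.2.2.1 o.2.2.2.2 *
              psiGG p a o.1 o.2.1 o.2.2.1 o.2.2.2.2))
            + p o * Dfun p a o.1 o.2.1 o.2.2.1 o.2.2.2.1 o.2.2.2.2 ^ 2)) :=
    Finset.sum_congr rfl fun o _ => by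
      rw [hD o.1 o.2.1 o.2.2.1 o.2.2.2.1 o.2.2.2.2]; ring
  have e2 : ∑ o : Y × A × G₁ × B₁ × G₂,
      p o * psiGB p a o.1 o.2.1 o.2.2.1 o.2.2.2.1 o.2.2.2.2
      = ∑ o : Y × A × G₁ × B₁ × G₂,
        (p o * psiGG p a o.1 o.2.1 o.2.2.1 o.2.2.2.2
          + p o * Dfun p a o.1 o.2.1 o.2.2.1 o.2.2.2.1 o.2.2.2.2) :=
    Finset.sum_congr rfl fun o _ => by
      rw [hD o.1 o.2.1 o.2.2.1 o.2.2.2.1 o.2.2.2.2]; ring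
  rw [e1, e2, Finset.sum_add_distrib, Finset.sum_add_distrib, Finset.sum_add_distrib,
    ← Finset.mul_sum, h2, h1]
  simp only [mul_zero, add_zero]
  linarith [hsq]

end
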